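/- Let X be a finite-dimensional real inner product space, let f : X → ℝ be differentiable with ∇f Lipschitz continuous of constant L_f > 0, let P₁, P₂ : X → ℝ be convex, and define ψ := f + P₁ − P₂. Fix x⁰ ∈ X and a subgradient ξ ∈ ∂P₂(x⁰). Let v ∈ X, L̂ > 0, L_g > 0, μ > 0, λ ≥ 0, c ∈ ℝ, define g(x) := c + ⟨v, x − x⁰⟩ + (L_g/(2μ))·‖x − x⁰‖², and suppose x* ∈ X minimizes over X the function L(x) := P₁(x) + ⟨∇f(x⁰) − ξ, x − x⁰⟩ + (L̂/2)·‖x − x⁰‖² + λ·g(x), with λ·g(x*) = 0. Then for all x ∈ X: ψ(x*) ≤ f(x⁰) + P₁(x) − P₂(x⁰) + ⟨∇f(x⁰) − ξ, x − x⁰⟩ + λ·g(x) + (L̂/2)·‖x − x⁰‖² + ((L_f − L̂)/2)·‖x* − x⁰‖² − ((μ·L̂ + λ·L_g)/(2μ))·‖x − x*‖². -/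

import Mathlib

open scoped InnerProductSpace Topology

private lemma norm_combo_sq {X : Type*} [NormedAddCommGroup X] [InnerProductSpace ℝ X]
    (a b : X) (t : ℝ) :
    ‖a + t • (b - a)‖ ^ 2 = (1 - t) * ‖a‖ ^ 2 + t * ‖b‖ ^ 2 - t * (1 - t) * ‖a - b‖ ^ 2 := by
  have h : ∀ u : X, ‖u‖ ^ 2 = ⟪u, u⟫_ℝ := fun u => (real_inner_self_eq_norm_sq u).symm
  rw [h, h, h, h]
  simp only [inner_add_left, inner_add_right, inner_sub_left, inner_sub_right,
    real_inner_smul_left, real_inner_smul_right, real_inner_comm a b]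
  ring

private lemma descent_lemma {X : Type*} [NormedAddCommGroup X] [InnerProductSpace ℝ X]
    [CompleteSpace X]
    (f : X → ℝ) (f' : X → X) (hf : ∀ x, HasGradientAt f (f' x) x)
    (Lf : ℝ) (hflip : ∀ x z : X, ‖f' x - f' z‖ ≤ Lf * ‖x - z‖)
    (x0 y : X) : f y ≤ f x0 + ⟪f' x0, y - x0⟫_ℝ + Lf / 2 * ‖y - x0‖ ^ 2 := by
  set d := y - x0 with hd
  set h : ℝ → ℝ := fun t =>
    f x0 + t * ⟪f' x0, d⟫_ℝ + Lf / 2 * t ^ 2 * ‖d‖ ^ 2 - f (x0 + t • d) with hhdef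
  have hder : ∀ t : ℝ, HasDerivAt h
      (⟪f' x0, d⟫_ℝ + Lf * t * ‖d‖ ^ 2 - ⟪f' (x0 + t • d), d⟫_ℝ) t := by
    intro t
    have hline : HasDerivAt (fun t : ℝ => x0 + t • d) d t := by
      simpa using ((hasDerivAt_id t).smul_const d).const_add x0
    have hcomp : HasDerivAt (fun t : ℝ => f (x0 + t • d)) (⟪f' (x0 + t • d), d⟫_ℝ) t := by
      have := (hf (x0 + t • d)).hasFDerivAt.comp_hasDerivAt t hline
      simpa [InnerProductSpace.toDual_apply_apply, Function.comp_def] using this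
    have h1 : HasDerivAt (fun t : ℝ => f x0 + t * ⟪f' x0, d⟫_ℝ + Lf / 2 * t ^ 2 * ‖d‖ ^ 2)
        (⟪f' x0, d⟫_ℝ + Lf * t * ‖d‖ ^ 2) t := by
      have : HasDerivAt (fun t : ℝ => f x0 + t * ⟪f' x0, d⟫_ℝ + Lf / 2 * t ^ 2 * ‖d‖ ^ 2)
          (0 + (1 * ⟪f' x0, d⟫_ℝ) + Lf / 2 * (↑2 * t ^ 1) * ‖d‖ ^ 2) t :=
        (((hasDerivAt_const t (f x0)).add
          ((hasDerivAt_id t).mul_const _)).add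
          ((((hasDerivAt_pow 2 t).const_mul (Lf / 2))).mul_const _))
      convert this using 1; push_cast; ring
    exact h1.sub hcomp
  have hmono : MonotoneOn h (Set.Icc 0 1) := by
    apply monotoneOn_of_deriv_nonneg (convex_Icc 0 1)
    · exact (continuous_iff_continuousAt.mpr fun t => (hder t).continuousAt).continuousOn
    · intro t ht
      exact (hder t).differentiableAt.differentiableWithinAt
    · intro t ht
      rw [(hder t).deriv]
      rw [interior_Icc, Set.mem_Ioo] at ht
      have hb : ⟪f' (x0 + t • d) - f' x0, d⟫_ℝ ≤ Lf * t * ‖d‖ ^ 2 := by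
        calc ⟪f' (x0 + t • d) - f' x0, d⟫_ℝ ≤ ‖f' (x0 + t • d) - f' x0‖ * ‖d‖ :=
              real_inner_le_norm _ _
          _ ≤ (Lf * ‖(x0 + t • d) - x0‖) * ‖d‖ :=
              mul_le_mul_of_nonneg_right (hflip _ _) (norm_nonneg _)
          _ = Lf * (|t| * ‖d‖) * ‖d‖ := by rw [add_sub_cancel_left, norm_smul]; rfl
          _ = Lf * t * ‖d‖ ^ 2 := by rw [abs_of_nonneg ht.1.le]; ring
      have hb' : ⟪f' (x0 + t • d), d⟫_ℝ - ⟪f' x0, d⟫_ℝ ≤ Lf * t * ‖d‖ ^ 2 := by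
        rw [← inner_sub_left]; exact hb
      linarith
  have h01 := hmono (Set.mem_Icc.mpr ⟨le_refl 0, zero_le_one⟩)
    (Set.mem_Icc.mpr ⟨zero_le_one, le_refl 1⟩) zero_le_one
  have hy : x0 + (1:ℝ) • d = y := by rw [one_smul, hd]; abel
  simp only [hhdef, hy, zero_smul, add_zero, zero_mul, mul_zero] at h01
  nlinarith [h01]

theorem smba_step_objective_bound
    {X : Type*} [NormedAddCommGroup X] [InnerProductSpace ℝ X] [FiniteDimensional ℝ X]
    (f : X → ℝ) (f' : X → X) (hf : ∀ x, HasGradientAt f (f' x) x)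
    (Lf : ℝ) (hLf : 0 < Lf)
    (hflip : ∀ x z : X, ‖f' x - f' z‖ ≤ Lf * ‖x - z‖)
    (P₁ P₂ : X → ℝ) (hP₁ : ConvexOn ℝ Set.univ P₁) (hP₂ : ConvexOn ℝ Set.univ P₂)
    (ψ : X → ℝ) (hψ : ∀ x, ψ x = f x + P₁ x - P₂ x)
    (x0 ξ : X) (hξ : ∀ z : X, P₂ x0 + ⟪ξ, z - x0⟫_ℝ ≤ P₂ z)
    (v : X) (Lhat Lg μ lam c : ℝ)
    (hLhat : 0 < Lhat) (hLg : 0 < Lg) (hμ : 0 < μ) (hlam : 0 ≤ lam)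
    (g : X → ℝ) (hg : ∀ x : X, g x = c + ⟪v, x - x0⟫_ℝ + Lg / (2 * μ) * ‖x - x0‖ ^ 2)
    (xs : X)
    (hmin : ∀ x : X,
      P₁ xs + ⟪f' x0 - ξ, xs - x0⟫_ℝ + Lhat / 2 * ‖xs - x0‖ ^ 2 + lam * g xs ≤
      P₁ x + ⟪f' x0 - ξ, x - x0⟫_ℝ + Lhat / 2 * ‖x - x0‖ ^ 2 + lam * g x)
    (hcomp : lam * g xs = 0) :
    ∀ x : X, ψ xs ≤ f x0 + P₁ x - P₂ x0 + ⟪f' x0 - ξ, x - x0⟫_ℝ + lam * g x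
      + Lhat / 2 * ‖x - x0‖ ^ 2 + (Lf - Lhat) / 2 * ‖xs - x0‖ ^ 2
      - (μ * Lhat + lam * Lg) / (2 * μ) * ‖x - xs‖ ^ 2 := by
  intro x
  set σ : ℝ := Lhat + lam * Lg / μ with hσ
  set L : X → ℝ := fun z =>
    P₁ z + ⟪f' x0 - ξ, z - x0⟫_ℝ + Lhat / 2 * ‖z - x0‖ ^ 2 + lam * g z with hLdef
  clear_value σ L
  -- strong convexity minimizer inequality
  have key : ∀ t ∈ Set.Ioo (0:ℝ) 1,
      L xs + σ / 2 * (1 - t) * ‖xs - x‖ ^ 2 ≤ L x := by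
    intro t ht
    obtain ⟨ht0, ht1⟩ := ht
    set xt : X := xs + t • (x - xs) with hxt
    clear_value xt
    have hxt' : xt = (1 - t) • xs + t • x := by
      rw [hxt]; module
    have hP1c : P₁ xt ≤ (1 - t) * P₁ xs + t * P₁ x := by
      rw [hxt']
      exact hP₁.2 (Set.mem_univ xs) (Set.mem_univ x) (by linarith) ht0.le (by ring)
    have hsub : xt - x0 = (xs - x0) + t • ((x - x0) - (xs - x0)) := by
      rw [hxt]; module
    have hlin : ∀ w : X, ⟪w, xt - x0⟫_ℝ = (1 - t) * ⟪w, xs - x0⟫_ℝ + t * ⟪w, x - x0⟫_ℝ := by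
      intro w
      rw [hsub]
      simp only [inner_add_right, inner_sub_right, real_inner_smul_right]
      ring
    have hns : xs - x0 - (x - x0) = xs - x := by abel
    have hq : ‖xt - x0‖ ^ 2 = (1 - t) * ‖xs - x0‖ ^ 2 + t * ‖x - x0‖ ^ 2
        - t * (1 - t) * ‖xs - x‖ ^ 2 := by
      rw [hsub, norm_combo_sq, hns]
    have heq : ⟪f' x0 - ξ, xt - x0⟫_ℝ + Lhat / 2 * ‖xt - x0‖ ^ 2 + lam * g xt
        = (1 - t) * (⟪f' x0 - ξ, xs - x0⟫_ℝ + Lhat / 2 * ‖xs - x0‖ ^ 2 + lam * g xs)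
        + t * (⟪f' x0 - ξ, x - x0⟫_ℝ + Lhat / 2 * ‖x - x0‖ ^ 2 + lam * g x)
        - σ / 2 * t * (1 - t) * ‖xs - x‖ ^ 2 := by
      simp only [hg]
      rw [hlin (f' x0 - ξ), hlin v, hq, hσ]
      field_simp
      ring
    have hLxt : L xt ≤ (1 - t) * L xs + t * L x - σ / 2 * t * (1 - t) * ‖xs - x‖ ^ 2 := by
      simp only [hLdef]
      linarith [hP1c, heq]
    have hmin' : L xs ≤ L xt := by simp only [hLdef]; exact hmin xt
    have h1 : t * (L xs + σ / 2 * (1 - t) * ‖xs - x‖ ^ 2) ≤ t * L x := by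
      nlinarith [hmin', hLxt]
    exact le_of_mul_le_mul_left h1 ht0
  have claimA : L xs + σ / 2 * ‖xs - x‖ ^ 2 ≤ L x := by
    have hne : (𝓝[Set.Ioo (0:ℝ) 1] 0).NeBot := left_nhdsWithin_Ioo_neBot one_pos
    have htend : Filter.Tendsto (fun t : ℝ => L xs + σ / 2 * (1 - t) * ‖xs - x‖ ^ 2)
        (𝓝[Set.Ioo (0:ℝ) 1] 0) (𝓝 (L xs + σ / 2 * ‖xs - x‖ ^ 2)) := by
      apply Filter.Tendsto.mono_left _ nhdsWithin_le_nhds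
      have hc : Continuous (fun t : ℝ => L xs + σ / 2 * (1 - t) * ‖xs - x‖ ^ 2) :=
        continuous_const.add (((continuous_const.mul (continuous_const.sub continuous_id)).mul
          continuous_const))
      simpa using hc.tendsto 0
    exact le_of_tendsto htend (Filter.eventually_mem_set.mpr self_mem_nhdsWithin |>.mono key)
  have hdesc := descent_lemma f f' hf Lf hflip x0 xs
  have hsg := hξ xs
  have hσ2 : σ / 2 = (μ * Lhat + lam * Lg) / (2 * μ) := by
    rw [hσ]; field_simp
  have hnorm : ‖xs - x‖ = ‖x - xs‖ := norm_sub_rev _ _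
  have hinner : ⟪f' x0 - ξ, xs - x0⟫_ℝ = ⟪f' x0, xs - x0⟫_ℝ - ⟪ξ, xs - x0⟫_ℝ :=
    inner_sub_left _ _ _
  simp only [hLdef] at claimA
  rw [hψ, ← hσ2, ← hnorm]
  linarith [claimA, hdesc, hsg, hinner, hcomp]
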